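/- Let V be a real inner product space (with inner product g), η a linear functional, ξ ∈ V with η = g(·,ξ), g(ξ,ξ)=1, and φ, h endomorphisms with φ² = −id + ξ·η, hξ=0, g(φX,φY)=g(X,Y)−η(X)η(Y), h symmetric with respect to g, hφ=−φh, h²=(κ−1)φ², κ<1. Suppose moreover φ∘h is symmetric with respect to g. Define g̃(X,Y) := (1/√(1−κ))·g(X, φhY) + η(X)η(Y). Then g̃ is a symmetric bilinear form, g̃(φ̃X, φ̃Y) = −g̃(X,Y) + η(X)η(Y) where φ̃ := h/√(1−κ), and g̃(X, φ̃Y) = g(X, φY) for all X, Y. -/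

import Mathlib

open RealInnerProductSpace

theorem stmt_11 {V : Type*} [NormedAddCommGroup V] [InnerProductSpace ℝ V]
    (ξ : V) (η : V →ₗ[ℝ] ℝ) (hη : ∀ X : V, η X = ⟪X, ξ⟫)
    (hξ : ⟪ξ, ξ⟫ = (1 : ℝ))
    (φ h : V →ₗ[ℝ] V) (κ : ℝ) (hκ : κ < 1)
    (hφ2 : ∀ X : V, φ (φ X) = -X + η X • ξ)
    (hhξ : h ξ = 0)
    (hφg : ∀ X Y : V, ⟪φ X, φ Y⟫ = ⟪X, Y⟫ - η X * η Y)
    (hsym : ∀ X Y : V, ⟪h X, Y⟫ = ⟪X, h Y⟫)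
    (hanti : ∀ X : V, h (φ X) = -φ (h X))
    (hh2 : ∀ X : V, h (h X) = (κ - 1) • φ (φ X))
    (hφhsym : ∀ X Y : V, ⟪φ (h X), Y⟫ = ⟪X, φ (h Y)⟫) :
    let gt : V → V → ℝ := fun X Y =>
      (1 / Real.sqrt (1 - κ)) * ⟪X, φ (h Y)⟫ + η X * η Y
    let φt : V → V := fun X => (1 / Real.sqrt (1 - κ)) • h X
    (∀ X Y : V, gt X Y = gt Y X) ∧
    (∀ X Y : V, gt (φt X) (φt Y) = -gt X Y + η X * η Y) ∧
    (∀ X Y : V, gt X (φt Y) = ⟪X, φ Y⟫) := by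
  intro gt φt
  set s := Real.sqrt (1 - κ) with hsdef
  have hs2 : s * s = 1 - κ := Real.mul_self_sqrt (by linarith)
  have hspos : 0 < s := Real.sqrt_pos.mpr (by linarith)
  have hs0 : s ≠ 0 := ne_of_gt hspos
  have hηξ : η ξ = 1 := by rw [hη]; exact hξ
  have hφξ : φ ξ = 0 := by
    have h0 := hφg ξ ξ
    rw [hξ, hηξ] at h0
    have : ⟪φ ξ, φ ξ⟫ = (0 : ℝ) := by rw [h0]; ring
    exact inner_self_eq_zero.mp this
  have hξ0 : ξ ≠ 0 := by
    intro hc; rw [hc, inner_zero_left] at hξ; norm_num at hξ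
  have hηh : ∀ X : V, η (h X) = 0 := by
    intro X
    rw [hη, hsym, hhξ, inner_zero_right]
  have hηφ : ∀ X : V, η (φ X) = 0 := by
    intro X
    have e1 : φ (φ (φ X)) = -φ X + η (φ X) • ξ := hφ2 (φ X)
    have e2 : φ (φ (φ X)) = -φ X := by
      have e0 : φ (φ (φ X)) = φ (-X + η X • ξ) := by rw [hφ2 X]
      rw [e0, map_add, map_neg, map_smul, hφξ, smul_zero, add_zero]
    rw [e2] at e1
    have e3 : η (φ X) • ξ = 0 := by
      have := e1.symm
      rwa [add_eq_left] at this
    rcases smul_eq_zero.mp e3 with h' | h'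
    · exact h'
    · exact absurd h' hξ0
  have hφhh : ∀ Y : V, φ (h (h Y)) = (1 - κ) • φ Y := by
    intro Y
    rw [hh2, map_smul, hφ2, hηφ, zero_smul, add_zero, smul_neg, ← neg_smul]
    ring_nf
  refine ⟨?_, ?_, ?_⟩
  · intro X Y
    simp only [gt]
    have e : ⟪X, φ (h Y)⟫ = ⟪Y, φ (h X)⟫ := (real_inner_comm _ X).trans (hφhsym Y X)
    rw [e]; ring
  · intro X Y
    simp only [gt, φt]
    rw [map_smul, map_smul, inner_smul_left, inner_smul_right, hφhh, inner_smul_right,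
      map_smul, map_smul, hηh, hηh]
    have h1 : ⟪h X, φ Y⟫ = -⟪X, φ (h Y)⟫ := by
      rw [hsym, hanti, inner_neg_right]
    rw [h1, ← hs2, Real.sqrt_mul_self hspos.le, conj_trivial]
    field_simp
    ring
  · intro X Y
    simp only [gt, φt]
    rw [map_smul, map_smul, inner_smul_right, map_smul, hηh, hφhh, inner_smul_right]
    rw [← hs2, Real.sqrt_mul_self hspos.le, smul_zero, mul_zero, add_zero]
    field_simp
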